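/- Let A, B : ℂ → ℂ with Δ(z) = A(z)² + 4B(z), and define λ±(z) = (A(z) ± √Δ(z))/2 for a fixed square root √Δ(z). Then for z with A(z) ≠ 0 and Δ(z) ≠ 0, we have |λ₊(z)| = |λ₋(z)| if and only if B(z)/A(z)² is real and less than -1/4. -/

import Mathlib

open Complex

theorem abs_lambda_eq_iff (A B Δ s : ℂ) (hA : A ≠ 0) (hΔ : Δ = A ^ 2 + 4 * B)
    (hΔ0 : Δ ≠ 0) (hs : s ^ 2 = Δ) :
    ‖(A + s) / 2‖ = ‖(A - s) / 2‖ ↔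
      (B / A ^ 2).im = 0 ∧ (B / A ^ 2).re < -1 / 4 := by
  have hs0 : s ≠ 0 := by
    intro h
    apply hΔ0
    rw [← hs, h]; ring
  obtain ⟨t, ht⟩ : ∃ t : ℂ, t = s / A := ⟨s / A, rfl⟩
  have ht0 : t ≠ 0 := ht ▸ div_ne_zero hs0 hA
  have hA2 : A ^ 2 ≠ 0 := pow_ne_zero 2 hA
  have hB : B / A ^ 2 = (t ^ 2 - 1) / 4 := by
    have hBe : B = (s ^ 2 - A ^ 2) / 4 := by rw [hs, hΔ]; ring
    rw [hBe, ht, div_pow, div_div, mul_comm, ← div_div, sub_div, div_self hA2]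
  have hAabs : ‖A‖ ≠ 0 := by simpa using hA
  have habs : ‖(A + s) / 2‖ = ‖(A - s) / 2‖ ↔ t.re = 0 := by
    have h1 : (A + s) / 2 = A * ((1 + t) / 2) := by rw [ht]; field_simp
    have h2 : (A - s) / 2 = A * ((1 - t) / 2) := by rw [ht]; field_simp
    rw [h1, h2, norm_mul, norm_mul, mul_right_inj' hAabs, norm_div, norm_div,
      div_left_inj' (by simpa using (two_ne_zero : (2:ℂ) ≠ 0)),
      Complex.norm_def, Complex.norm_def,
      Real.sqrt_inj (normSq_nonneg _) (normSq_nonneg _)]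
    simp only [normSq_apply, add_re, add_im, sub_re, sub_im, one_re, one_im]
    constructor
    · intro h; nlinarith
    · intro h; rw [h]; ring
  have him : ((t ^ 2 - 1) / 4 : ℂ).im = t.re * t.im / 2 := by
    simp [Complex.div_im, Complex.normSq_apply, pow_two, Complex.mul_im,
      Complex.mul_re]
    ring
  have hre : ((t ^ 2 - 1) / 4 : ℂ).re = (t.re ^ 2 - t.im ^ 2 - 1) / 4 := by
    simp [Complex.div_re, Complex.normSq_apply, pow_two, Complex.mul_im,
      Complex.mul_re]
  rw [habs, hB, him, hre]
  have hext : t.re = 0 → t.im ≠ 0 := by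
    intro h1 h2
    exact ht0 (Complex.ext h1 h2)
  constructor
  · intro h
    have hb := hext h
    have : t.im ^ 2 > 0 := by positivity
    constructor
    · rw [h]; ring
    · rw [h]; nlinarith
  · rintro ⟨h1, h2⟩
    have hri : t.re * t.im = 0 := by linarith
    rcases mul_eq_zero.mp hri with h | h
    · exact h
    · exfalso; rw [h] at h2; nlinarith [sq_nonneg t.re]
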